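/- Assume ρ < 1 and let (γ_i)_{i≥0}, (δ_i)_{i≥0} be the compensation sequences: γ₀ = ρ², for each i ≥ 0, δ_i is the unique complex number with 0 < |δ_i| < |γ_i| such that (γ_i, δ_i) satisfies the kernel equation, and γ_{i+1} is the unique complex number with 0 < |γ_{i+1}| < |δ_i| such that (γ_{i+1}, δ_i) satisfies the kernel equation. Then for all i ≥ 0: |γ_i| ≤ (0.4)^i · ρ² and |δ_i| ≤ (1/2)·(0.4)^i · ρ². -/

import Mathlib

/-- The load ρ = λ(ā²+a²)/(2λ̄āa). -/
noncomputable def rhoLoad (a lam : ℝ) : ℝ :=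
  lam * ((1-a)^2 + a^2) / (2 * (1-lam) * (1-a) * a)

/-- The kernel equation in (γ, δ) ∈ ℂ². -/
def Kernel (a lam : ℝ) (g d : ℂ) : Prop :=
  (1 - ((1-(lam:ℂ))*((1-(a:ℂ))^2+(a:ℂ)^2) + (lam:ℂ)*(a:ℂ)*(1-(a:ℂ)))) * g * d
    = ((1-(lam:ℂ))*(1-(a:ℂ))*(a:ℂ)*g + (lam:ℂ)*((a:ℂ)^2+(1-(a:ℂ))^2)) * d^2
      + (lam:ℂ)*(1-(a:ℂ))*(a:ℂ)*d^3 + (1-(lam:ℂ))*(1-(a:ℂ))*(a:ℂ)*g^2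

def eP (a lam : ℝ) : ℝ := (1-lam)*((1-a)*a)
def bP (a lam : ℝ) : ℝ := lam*((1-a)*a)
def cP (a lam : ℝ) : ℝ := lam*((1-a)^2+a^2)
def kP (a lam : ℝ) : ℝ := 1 - ((1-lam)*((1-a)^2+a^2) + lam*a*(1-a))

lemma psi_step (e b c k x y ρ σ : ℝ) (he : 0 < e) (hb : 0 ≤ b) (hc : 0 ≤ c)
    (hx : 0 < x) (hy : 0 < y) (hyx : y < x) (hxρ : x ≤ ρ^2)
    (hρ0 : 0 < ρ) (hσ0 : 0 < σ) (hσ1 : σ < 1)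
    (hkey : k*x*y - (e*x+c)*y^2 - b*y^3 ≤ e*x^2)
    (hψσ : e < k*σ - (e*ρ^2+c)*σ^2 - b*ρ^2*σ^3)
    (hψ1 : e < k - (e*ρ^2+c) - b*ρ^2) :
    y ≤ σ*x := by
  by_contra h
  push_neg at h
  obtain ⟨s, rfl⟩ : ∃ s, y = s * x := ⟨y/x, by field_simp⟩
  have hs1 : s < 1 := by
    by_contra h'
    push_neg at h'
    nlinarith
  have hsσ : σ < s := by
    by_contra h'
    push_neg at h'
    nlinarith
  have hs0 : 0 < s := lt_trans hσ0 hsσ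
  have h1 : k*s - (e*x+c)*s^2 - b*x*s^3 ≤ e := by
    have h2 : (k*s - (e*x+c)*s^2 - b*x*s^3) * x^2 ≤ e * x^2 := by nlinarith [hkey]
    exact le_of_mul_le_mul_right h2 (by positivity)
  have h3 : k*s - (e*ρ^2+c)*s^2 - b*ρ^2*s^3 ≤ e := by
    nlinarith [mul_nonneg (mul_nonneg he.le (sub_nonneg.2 hxρ)) (sq_nonneg s),
      mul_nonneg (mul_nonneg hb (sub_nonneg.2 hxρ)) (pow_nonneg hs0.le 3)]
  have hid : (1-σ)*(k*s - (e*ρ^2+c)*s^2 - b*ρ^2*s^3)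
      - (1-s)*(k*σ - (e*ρ^2+c)*σ^2 - b*ρ^2*σ^3)
      - (s-σ)*(k - (e*ρ^2+c) - b*ρ^2)
      = (s-σ)*(1-s)*(1-σ)*((e*ρ^2+c) + (b*ρ^2)*(s+1+σ)) := by ring
  have hprod : (0:ℝ) ≤ (s-σ)*(1-s)*(1-σ)*((e*ρ^2+c) + (b*ρ^2)*(s+1+σ)) := by
    have h5 : (0:ℝ) ≤ s+1+σ := by positivity
    have h4 : (0:ℝ) ≤ (e*ρ^2+c) + (b*ρ^2)*(s+1+σ) := by positivity
    exact mul_nonneg (mul_nonneg (mul_nonneg (sub_nonneg.2 hsσ.le) (sub_nonneg.2 hs1.le)) (sub_nonneg.2 hσ1.le)) h4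
  have hp1 : (1-s)*e < (1-s)*(k*σ - (e*ρ^2+c)*σ^2 - b*ρ^2*σ^3) :=
    mul_lt_mul_of_pos_left hψσ (by linarith)
  have hp2 : (s-σ)*e < (s-σ)*(k - (e*ρ^2+c) - b*ρ^2) :=
    mul_lt_mul_of_pos_left hψ1 (by linarith)
  have hp3 : (1-σ)*(k*s - (e*ρ^2+c)*s^2 - b*ρ^2*s^3) ≤ (1-σ)*e :=
    mul_le_mul_of_nonneg_left h3 (by linarith)
  nlinarith [hid, hprod, hp1, hp2, hp3]

lemma basic_facts (a lam : ℝ) (ha : 0 < a) (ha1 : a < 1) (hl : 0 < lam) (hl1 : lam < 1) :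
    0 < eP a lam ∧ 0 < bP a lam ∧ 0 < cP a lam ∧
    cP a lam = 2 * eP a lam * rhoLoad a lam ∧
    kP a lam = cP a lam + (1-a)*a*(2-lam) ∧
    bP a lam ≤ eP a lam * rhoLoad a lam ∧
    0 < rhoLoad a lam ∧
    eP a lam = (1-lam)*((1-a)*a) := by
  have haa : (0:ℝ) < (1-a)*a := mul_pos (by linarith) ha
  have he : 0 < eP a lam := mul_pos (by linarith) haa
  have hb : 0 < bP a lam := mul_pos hl haa
  have hc : 0 < cP a lam := by
    unfold cP; nlinarith [sq_nonneg (1-2*a)]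
  have hne : (2 * (1-lam) * (1-a) * a) ≠ 0 := by
    have : (0:ℝ) < 2 * (1-lam) * (1-a) * a := by nlinarith
    linarith
  have hceq : cP a lam = 2 * eP a lam * rhoLoad a lam := by
    unfold cP eP rhoLoad
    rw [eq_comm]
    have hl' : 1 - lam ≠ 0 := by linarith
    have ha' : 1 - a ≠ 0 := by linarith
    have ha0 : a ≠ 0 := by linarith
    field_simp
  have hρ0 : 0 < rhoLoad a lam := by
    have h2e : 0 < 2 * eP a lam := by linarith
    nlinarith
  refine ⟨he, hb, hc, hceq, ?_, ?_, hρ0, rfl⟩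
  · unfold kP cP; ring
  · have h2 : 2 * bP a lam ≤ cP a lam := by
      unfold bP cP; nlinarith [sq_nonneg (1-2*a)]
    linarith

lemma kernel_abs (a lam : ℝ) (ha : 0 < a) (ha1 : a < 1) (hl : 0 < lam) (hl1 : lam < 1)
    (g d : ℂ) (hK : Kernel a lam g d) :
    kP a lam * ‖g‖ * ‖d‖ ≤ eP a lam * (‖g‖)^2
      + (eP a lam * ‖g‖ + cP a lam) * (‖d‖)^2
      + bP a lam * (‖d‖)^3 := by
  have haa : (0:ℝ) < (1-a)*a := mul_pos (by linarith) ha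
  have hk0 : 0 ≤ kP a lam := by
    unfold kP
    nlinarith [mul_pos hl (show (0:ℝ) < 1-(1-a)*a by nlinarith),
      mul_pos (show (0:ℝ) < 1-lam by linarith) haa]
  have he0 : 0 ≤ eP a lam := le_of_lt (mul_pos (by linarith) haa)
  have hb0 : 0 ≤ bP a lam := le_of_lt (mul_pos hl haa)
  have hc0 : 0 ≤ cP a lam := by unfold cP; nlinarith [sq_nonneg (1-a), sq_nonneg a]
  unfold Kernel at hK
  have hA : ((kP a lam : ℝ) : ℂ) * (g * d) =
      ((eP a lam : ℝ):ℂ)*g^2 + (((eP a lam : ℝ):ℂ)*g + ((cP a lam : ℝ):ℂ))*d^2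
        + ((bP a lam : ℝ):ℂ)*d^3 := by
    unfold kP eP bP cP
    push_cast
    linear_combination hK
  have h1 : kP a lam * ‖g‖ * ‖d‖
      = ‖((kP a lam : ℝ) : ℂ) * (g * d)‖ := by
    rw [norm_mul, norm_mul, Complex.norm_real, Real.norm_eq_abs, abs_of_nonneg hk0]
    ring
  rw [h1, hA]
  refine le_trans (norm_add_le _ _) ?_
  have h2 : ‖((eP a lam : ℝ):ℂ)*g^2 + (((eP a lam : ℝ):ℂ)*g + ((cP a lam : ℝ):ℂ))*d^2‖
      ≤ eP a lam * (‖g‖)^2 + (eP a lam * ‖g‖ + cP a lam) * (‖d‖)^2 := by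
    refine le_trans (norm_add_le _ _) ?_
    have hh1 : ‖((eP a lam : ℝ):ℂ)*g^2‖ = eP a lam * (‖g‖)^2 := by
      rw [norm_mul, norm_pow, Complex.norm_real, Real.norm_eq_abs, abs_of_nonneg he0]
    have hh2 : ‖((eP a lam : ℝ):ℂ)*g + ((cP a lam : ℝ):ℂ)‖ ≤ eP a lam * ‖g‖ + cP a lam := by
      refine le_trans (norm_add_le _ _) ?_
      rw [norm_mul, Complex.norm_real, Real.norm_eq_abs, Complex.norm_real, Real.norm_eq_abs, abs_of_nonneg he0, abs_of_nonneg hc0]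
    have hh3 : ‖(((eP a lam : ℝ):ℂ)*g + ((cP a lam : ℝ):ℂ))*d^2‖
        ≤ (eP a lam * ‖g‖ + cP a lam) * (‖d‖)^2 := by
      rw [norm_mul, norm_pow]
      exact mul_le_mul_of_nonneg_right hh2 (pow_nonneg (norm_nonneg d) 2)
    linarith
  have h3 : ‖((bP a lam : ℝ):ℂ)*d^3‖ = bP a lam * (‖d‖)^3 := by
    rw [norm_mul, norm_pow, Complex.norm_real, Real.norm_eq_abs, abs_of_nonneg hb0]
  linarith

set_option maxHeartbeats 2000000 in
lemma delta_bound (a lam : ℝ) (ha : 0 < a) (ha1 : a < 1) (hl : 0 < lam) (hl1 : lam < 1)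
    (hρ : rhoLoad a lam < 1) (g d : ℂ) (hK : Kernel a lam g d)
    (hd0 : 0 < ‖d‖) (hdg : ‖d‖ < ‖g‖)
    (hgρ : ‖g‖ ≤ (rhoLoad a lam)^2) :
    ‖d‖ ≤ (1/2) * ‖g‖ ∧
      ((0.64:ℝ) ≤ rhoLoad a lam → ‖d‖ ≤ (0.4:ℝ) * ‖g‖) := by
  obtain ⟨he, hb, hc, hceq, hkeq, hbe, hρ0, heeq⟩ := basic_facts a lam ha ha1 hl hl1
  set ρ := rhoLoad a lam
  set x := ‖g‖
  set y := ‖d‖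
  set e := eP a lam
  set b := bP a lam
  set c := cP a lam
  set k := kP a lam
  have haa : (0:ℝ) < (1-a)*a := mul_pos (by linarith) ha
  have hx : 0 < x := lt_trans hd0 hdg
  have hkey : k*x*y - (e*x+c)*y^2 - b*y^3 ≤ e*x^2 := by
    have := kernel_abs a lam ha ha1 hl hl1 g d hK
    linarith
  have hψ1 : e < k - (e*ρ^2+c) - b*ρ^2 := by
    -- k - c = aa*(2-lam), e+b = aa, e = aa*(1-lam)
    have hebaa : e + b = (1-a)*a := by rw [heeq]; unfold b; unfold bP; ring
    nlinarith [mul_pos haa (show (0:ℝ) < 1 - ρ^2 by nlinarith)]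
  constructor
  · refine psi_step e b c k x y ρ (1/2) he hb.le hc.le hx hd0 hdg hgρ hρ0 (by norm_num) (by norm_num) hkey ?_ hψ1
    have hbρ : b*ρ^2 ≤ e*ρ^3 := by nlinarith
    nlinarith [mul_pos hl haa, mul_pos (mul_pos he hρ0) (show (0:ℝ) < 4 - 2*ρ - ρ^2 by nlinarith)]
  · intro h64
    have h04 : (0.4:ℝ) = 2/5 := by norm_num
    rw [h04]
    refine psi_step e b c k x y ρ (2/5) he hb.le hc.le hx hd0 hdg hgρ hρ0 (by norm_num) (by norm_num) hkey ?_ hψ1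
    have hbρ : b*ρ^2 ≤ e*ρ^3 := by nlinarith
    -- need: e < k*(2/5) - (e*ρ^2+c)*(4/25) - b*ρ^2*(8/125)
    -- reduces to (1-lam)*F(ρ) + 0.6*lam - 0.2 > 0 with F = 0.48ρ-0.16ρ²-0.064ρ³
    have hF : (0.2:ℝ) < 0.48*ρ - 0.16*ρ^2 - 0.064*ρ^3 := by
      nlinarith [mul_nonneg (sub_nonneg.2 h64) (sub_nonneg.2 hρ.le),
        mul_nonneg (mul_nonneg (sub_nonneg.2 h64) (sub_nonneg.2 hρ.le)) hρ0.le]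
    nlinarith [mul_pos hl haa, mul_pos (mul_pos (show (0:ℝ) < 1-lam by linarith) haa)
        (show (0:ℝ) < 0.48*ρ - 0.16*ρ^2 - 0.064*ρ^3 - 0.2 by linarith),
      mul_pos (mul_pos hl haa) (show (0:ℝ) < 0.6 - (0.48*ρ - 0.16*ρ^2 - 0.064*ρ^3) by nlinarith)]
lemma gamma_eq (a lam : ℝ) (g g' d : ℂ) (hK : Kernel a lam g d) (hK' : Kernel a lam g' d)
    (hne : g ≠ g') :
    ((eP a lam : ℝ):ℂ) * (g*g') = ((cP a lam : ℝ):ℂ)*d^2 + ((bP a lam : ℝ):ℂ)*d^3 := by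
  unfold Kernel at hK hK'
  have hsub : (g - g') * ((1 - ((1-(lam:ℂ))*((1-(a:ℂ))^2+(a:ℂ)^2) + (lam:ℂ)*(a:ℂ)*(1-(a:ℂ))))*d
      - (1-(lam:ℂ))*(1-(a:ℂ))*(a:ℂ)*d^2 - (1-(lam:ℂ))*(1-(a:ℂ))*(a:ℂ)*(g+g')) = 0 := by
    linear_combination hK - hK'
  have hfac := (mul_eq_zero.1 hsub).resolve_left (sub_ne_zero.2 hne)
  unfold eP cP bP
  push_cast
  linear_combination hK - g*hfac

set_option maxHeartbeats 1000000 in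
lemma gamma_bound (a lam : ℝ) (ha : 0 < a) (ha1 : a < 1) (hl : 0 < lam) (hl1 : lam < 1)
    (hρ : rhoLoad a lam < 1) (g g' d : ℂ) (hK : Kernel a lam g d) (hK' : Kernel a lam g' d)
    (hd0 : 0 < ‖d‖) (hdg : ‖d‖ < ‖g‖)
    (hg'd : ‖g'‖ < ‖d‖)
    (hgρ : ‖g‖ ≤ (rhoLoad a lam)^2) :
    ‖g'‖ ≤ (0.4:ℝ) * ‖g‖ := by
  obtain ⟨he, hb, hc, hceq, hkeq, hbe, hρ0, heeq⟩ := basic_facts a lam ha ha1 hl hl1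
  obtain ⟨h12, h04⟩ := delta_bound a lam ha ha1 hl hl1 hρ g d hK hd0 hdg hgρ
  have hne : g ≠ g' := by
    intro h
    rw [h] at hdg
    linarith
  have hEQ := gamma_eq a lam g g' d hK hK' hne
  set ρ := rhoLoad a lam
  set x := ‖g‖
  set y := ‖d‖
  set z := ‖g'‖
  set e := eP a lam
  set b := bP a lam
  set c := cP a lam
  have hx : 0 < x := lt_trans hd0 hdg
  have hy1 : y < 1 := by nlinarith
  have hmain : e * (x * z) ≤ c * y^2 + b * y^3 := by
    have h1 : ‖((e:ℝ):ℂ) * (g*g')‖ = e * (x*z) := by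
      rw [norm_mul, norm_mul, Complex.norm_real, Real.norm_eq_abs, abs_of_nonneg he.le]
    have h2 : ‖((c:ℝ):ℂ)*d^2 + ((b:ℝ):ℂ)*d^3‖ ≤ c * y^2 + b * y^3 := by
      refine le_trans (norm_add_le _ _) ?_
      rw [norm_mul, norm_mul, norm_pow, norm_pow, Complex.norm_real, Real.norm_eq_abs, Complex.norm_real, Real.norm_eq_abs,
        abs_of_nonneg hc.le, abs_of_nonneg hb.le]
    rw [← h1, hEQ]
    exact h2
  have hex : 0 < e * x := mul_pos he hx
  have hfinal : (e*x)*z ≤ (e*x)*(0.4*x) := by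
    rcases le_or_gt ρ 0.64 with hcase | hcase
    · have hy2 : y ≤ x/2 := by linarith
      have hy3 : y ≤ ρ^2/2 := by linarith
      have hyy : y^2 ≤ x^2/4 := by nlinarith
      have hyyy : y^3 ≤ (x^2/4)*(ρ^2/2) := by nlinarith
      have hc1 : c*y^2 ≤ 2*e*ρ*(x^2/4) := by
        rw [hceq]; exact mul_le_mul_of_nonneg_left hyy (by positivity)
      have hc2 : b*y^3 ≤ (e*ρ)*((x^2/4)*(ρ^2/2)) := by
        calc b*y^3 ≤ (e*ρ)*y^3 := mul_le_mul_of_nonneg_right hbe (pow_nonneg hd0.le 3)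
          _ ≤ (e*ρ)*((x^2/4)*(ρ^2/2)) := mul_le_mul_of_nonneg_left hyyy (by positivity)
      have hq : 2*e*ρ*(x^2/4) + (e*ρ)*((x^2/4)*(ρ^2/2)) ≤ (e*x)*(0.4*x) := by
        nlinarith [mul_pos (mul_pos he hx) hx, mul_pos (mul_pos (mul_pos he hx) hx) hρ0,
          mul_pos (mul_pos (mul_pos (mul_pos he hx) hx) hρ0) hρ0]
      calc (e*x)*z = e*(x*z) := by ring
        _ ≤ c*y^2 + b*y^3 := hmain
        _ ≤ (e*x)*(0.4*x) := by linarith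
    · have hy2 : y ≤ 0.4*x := h04 hcase.le
      have hy3 : y ≤ 0.4*ρ^2 := by nlinarith
      have hyy : y^2 ≤ 0.16*x^2 := by nlinarith
      have hyyy : y^3 ≤ (0.16*x^2)*(0.4*ρ^2) := by nlinarith
      have hc1 : c*y^2 ≤ 2*e*ρ*(0.16*x^2) := by
        rw [hceq]; exact mul_le_mul_of_nonneg_left hyy (by positivity)
      have hc2 : b*y^3 ≤ (e*ρ)*((0.16*x^2)*(0.4*ρ^2)) := by
        calc b*y^3 ≤ (e*ρ)*y^3 := mul_le_mul_of_nonneg_right hbe (pow_nonneg hd0.le 3)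
          _ ≤ (e*ρ)*((0.16*x^2)*(0.4*ρ^2)) := mul_le_mul_of_nonneg_left hyyy (by positivity)
      have hq : 2*e*ρ*(0.16*x^2) + (e*ρ)*((0.16*x^2)*(0.4*ρ^2)) ≤ (e*x)*(0.4*x) := by
        nlinarith [mul_pos (mul_pos he hx) hx, mul_pos (mul_pos (mul_pos he hx) hx) hρ0,
          mul_pos (mul_pos (mul_pos (mul_pos he hx) hx) hρ0) hρ0]
      calc (e*x)*z = e*(x*z) := by ring
        _ ≤ c*y^2 + b*y^3 := hmain
        _ ≤ (e*x)*(0.4*x) := by linarith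
  exact le_of_mul_le_mul_left hfinal hex

/-- geometric decay of the compensation sequences:
|γ_i| ≤ 0.4^i ρ² and |δ_i| ≤ (1/2) 0.4^i ρ². -/
theorem stmt7 (a lam : ℝ) (ha : 0 < a) (ha1 : a < 1) (hl : 0 < lam) (hl1 : lam < 1)
    (hρ : rhoLoad a lam < 1)
    (g d : ℕ → ℂ)
    (hg0 : g 0 = (((rhoLoad a lam)^2 : ℝ) : ℂ))
    (hd : ∀ i : ℕ, 0 < ‖d i‖ ∧ ‖d i‖ < ‖g i‖ ∧
      Kernel a lam (g i) (d i))
    (hdu : ∀ i : ℕ, ∀ z : ℂ, 0 < ‖z‖ → ‖z‖ < ‖g i‖ →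
      Kernel a lam (g i) z → z = d i)
    (hg : ∀ i : ℕ, 0 < ‖g (i+1)‖ ∧
      ‖g (i+1)‖ < ‖d i‖ ∧ Kernel a lam (g (i+1)) (d i))
    (hgu : ∀ i : ℕ, ∀ z : ℂ, 0 < ‖z‖ → ‖z‖ < ‖d i‖ →
      Kernel a lam z (d i) → z = g (i+1)) :
    ∀ i : ℕ, ‖g i‖ ≤ (0.4:ℝ)^i * (rhoLoad a lam)^2 ∧
      ‖d i‖ ≤ (1/2) * (0.4:ℝ)^i * (rhoLoad a lam)^2 := by
  obtain ⟨he, hb, hc, hceq, hkeq, hbe, hρ0, heeq⟩ := basic_facts a lam ha ha1 hl hl1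
  have habs0 : ‖g 0‖ = (rhoLoad a lam)^2 := by
    rw [hg0, Complex.norm_real, Real.norm_eq_abs, abs_of_nonneg (by positivity)]
  have hsq : 0 < (rhoLoad a lam)^2 := by positivity
  have main : ∀ i, ‖g i‖ ≤ (0.4:ℝ)^i * (rhoLoad a lam)^2 := by
    intro i
    induction i with
    | zero => simp [habs0]
    | succ n ih =>
      have hpow : (0.4:ℝ)^n ≤ 1 := pow_le_one₀ (by norm_num) (by norm_num)
      have hgn : ‖g n‖ ≤ (rhoLoad a lam)^2 := le_trans ih (by nlinarith)
      obtain ⟨hd0, hdg, hKd⟩ := hd n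
      obtain ⟨hg0', hgd, hKg⟩ := hg n
      have hstep := gamma_bound a lam ha ha1 hl hl1 hρ (g n) (g (n+1)) (d n) hKd hKg hd0 hdg hgd hgn
      calc ‖g (n+1)‖ ≤ 0.4 * ‖g n‖ := hstep
        _ ≤ 0.4 * ((0.4:ℝ)^n * (rhoLoad a lam)^2) := by
            have := mul_le_mul_of_nonneg_left ih (show (0:ℝ) ≤ 0.4 by norm_num)
            linarith
        _ = (0.4:ℝ)^(n+1) * (rhoLoad a lam)^2 := by ring
  intro i
  refine ⟨main i, ?_⟩
  obtain ⟨hd0, hdg, hKd⟩ := hd i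
  have hpow : (0.4:ℝ)^i ≤ 1 := pow_le_one₀ (by norm_num) (by norm_num)
  have hgn : ‖g i‖ ≤ (rhoLoad a lam)^2 := le_trans (main i) (by nlinarith)
  have h12 := (delta_bound a lam ha ha1 hl hl1 hρ (g i) (d i) hKd hd0 hdg hgn).1
  have := main i
  linarith
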